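/- Let θ be inner and g ∈ L^∞(T) with ker A_g^θ ≠ {0}, and write ker A_g^θ = w₁·K_{zΦ} where (w₁,w₂)ᵀ is the normalized element of ker T_G ⊖ (ker T_G ∩ zH²(D,C²)) for G = [[conj(θ),0],[g,θ]] and Φ is the associated inner function. Then ker A_g^θ is nearly S*-invariant with defect space span{w₁/z} ∩ H²; in particular, ker A_g^θ is nearly S*-invariant with defect at most 1. -/

import Mathlib

open MeasureTheory Complex Real
open scoped ENNReal ComplexConjugate

noncomputable section

namespace Paper

instance : Fact (0 < 2 * Real.pi) := ⟨by positivity⟩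

abbrev Tc : Type := AddCircle (2 * Real.pi)
abbrev μ0 : MeasureTheory.Measure Tc := AddCircle.haarAddCircle
abbrev L2 : Type := MeasureTheory.Lp ℂ 2 μ0

def coeffCLM (n : ℤ) : L2 →L[ℂ] ℂ :=
  LinearMap.mkContinuous
    { toFun := fun f => fourierBasis.repr f n
      map_add' := fun f g => by simp
      map_smul' := fun c f => by simp }
    1
    (fun f => by
      have h := lp.norm_apply_le_norm (p := 2) (by norm_num) (fourierBasis.repr f) n
      simpa using h)

def cf (f : L2) (n : ℤ) : ℂ := coeffCLM n f

/-- The subspace of `L²(𝕋)` of functions whose Fourier coefficients of index `< k` vanish.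
Thus `coeffGE 0 = H²` and `coeffGE k = zᵏH²` for `k ≥ 0`. -/
def coeffGE (k : ℤ) : Submodule ℂ L2 :=
  ⨅ (n : ℤ) (_ : n < k), LinearMap.ker (coeffCLM n : L2 →ₗ[ℂ] ℂ)

/-- The subspace of `L²(𝕋)` of functions whose Fourier coefficients of index `≥ k` vanish.
Thus `coeffLT 0 = conj (H²₀) = (H²)^⊥`. -/
def coeffLT (k : ℤ) : Submodule ℂ L2 :=
  ⨅ (n : ℤ) (_ : k ≤ n), LinearMap.ker (coeffCLM n : L2 →ₗ[ℂ] ℂ)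

/-- The Hardy space `H²` of the unit disc, viewed as a subspace of `L²(𝕋)`. -/
def H2 : Submodule ℂ L2 := coeffGE 0

lemma mem_coeffGE {k : ℤ} {f : L2} : f ∈ coeffGE k ↔ ∀ n < k, cf f n = 0 := by
  simp [coeffGE, cf, Submodule.mem_iInf, LinearMap.mem_ker]

lemma isClosed_coeffGE (k : ℤ) : IsClosed ((coeffGE k : Submodule ℂ L2) : Set L2) := by
  have h : ((coeffGE k : Submodule ℂ L2) : Set L2)
      = ⋂ (n : ℤ) (_ : n < k), (LinearMap.ker (coeffCLM n : L2 →ₗ[ℂ] ℂ) : Set L2) := by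
    ext f
    simp [coeffGE, Submodule.mem_iInf, Set.mem_iInter]
  rw [h]
  exact isClosed_iInter fun n => isClosed_iInter fun _ => ContinuousLinearMap.isClosed_ker (coeffCLM n)

end Paper
namespace Paper

open scoped Classical in
/-- Multiplication by an `L^∞` function, as a linear map on `L²(𝕋)` (defined to be `0` if the
symbol is not essentially bounded). -/
def mulLM (g : Tc → ℂ) : L2 →ₗ[ℂ] L2 :=
  if hg : MemLp g ⊤ μ0 then
    { toFun := fun f => ((MemLp.smul (r := 2) (Lp.memLp f) hg)).toLp (g • ⇑f)
      map_add' := fun f₁ f₂ => by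
        apply Lp.ext
        filter_upwards [MemLp.coeFn_toLp ((MemLp.smul (r := 2) (Lp.memLp (f₁ + f₂)) hg)),
          MemLp.coeFn_toLp ((MemLp.smul (r := 2) (Lp.memLp f₁) hg)),
          MemLp.coeFn_toLp ((MemLp.smul (r := 2) (Lp.memLp f₂) hg)),
          Lp.coeFn_add f₁ f₂,
          Lp.coeFn_add (((MemLp.smul (r := 2) (Lp.memLp f₁) hg)).toLp (g • ⇑f₁))
            (((MemLp.smul (r := 2) (Lp.memLp f₂) hg)).toLp (g • ⇑f₂))] with x h0 h1 h2 h3 h4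
        rw [h0, h4, Pi.add_apply, h1, h2]
        simp only [Pi.smul_apply', Pi.add_apply, h3, smul_add]
      map_smul' := fun c f => by
        apply Lp.ext
        filter_upwards [MemLp.coeFn_toLp ((MemLp.smul (r := 2) (Lp.memLp (c • f)) hg)),
          MemLp.coeFn_toLp ((MemLp.smul (r := 2) (Lp.memLp f) hg)),
          Lp.coeFn_smul c f,
          Lp.coeFn_smul c (((MemLp.smul (r := 2) (Lp.memLp f) hg)).toLp (g • ⇑f))] with x h0 h1 h3 h4
        simp only [RingHom.id_apply]
        rw [h0, h4, Pi.smul_apply, h1]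
        simp only [Pi.smul_apply', Pi.smul_apply, h3]
        exact smul_comm _ _ _ }
  else 0

end Paper
namespace Paper

/-- The orthogonal projection of `L²(𝕋)` onto a closed subspace, as a map `L² → L²`. -/
def projCLM (U : Submodule ℂ L2) (hU : IsClosed (U : Set L2)) : L2 →L[ℂ] L2 :=
  letI : CompleteSpace U := hU.completeSpace_coe
  U.subtypeL.comp (U.orthogonalProjectionOnto)

/-- The subspace `θH²` of `L²(𝕋)`. -/
def thetaH2 (θ : Tc → ℂ) : Submodule ℂ L2 := H2.map (mulLM θ)

/-- The model space `K_θ = H² ⊖ θH²`. -/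
def Kmod (θ : Tc → ℂ) : Submodule ℂ L2 := H2 ⊓ (thetaH2 θ)ᗮ

lemma isClosed_Kmod (θ : Tc → ℂ) : IsClosed ((Kmod θ : Submodule ℂ L2) : Set L2) :=
  (isClosed_coeffGE 0).inter (thetaH2 θ).isClosed_orthogonal

/-- The orthogonal projection `P_θ : L² → K_θ` (composed with the inclusion back into `L²`). -/
def Ptheta (θ : Tc → ℂ) : L2 →L[ℂ] L2 := projCLM (Kmod θ) (isClosed_Kmod θ)

/-- The orthogonal projection `P₊ : L² → H²`. -/
def Pplus : L2 →L[ℂ] L2 := projCLM H2 (isClosed_coeffGE 0)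

/-- The independent variable `z = e^{it}`, as a function on the circle. -/
def zf : Tc → ℂ := fun x => fourier 1 x

/-- The conjugate variable `z̄ = e^{-it}`. -/
def zbar : Tc → ℂ := fun x => fourier (-1) x

lemma memLp_fourier (n : ℤ) : MemLp (fun x : Tc => (fourier n x : ℂ)) ⊤ μ0 := by
  refine memLp_top_of_bound ((fourier n).continuous.aestronglyMeasurable) 1 ?_
  exact Filter.Eventually.of_forall fun x => le_of_eq (Circle.norm_coe _)

lemma memLp_zf : MemLp zf ⊤ μ0 := memLp_fourier 1

lemma memLp_zbar : MemLp zbar ⊤ μ0 := memLp_fourier (-1)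

/-- The backward shift `S* : f ↦ (f - f(0))/z`, realised on `L²(𝕋)` as
`f ↦ P₊(z̄ f)`; on `H²` this is the usual backward shift. -/
def Sstar : L2 →ₗ[ℂ] L2 := (Pplus : L2 →ₗ[ℂ] L2).comp (mulLM zbar)

/-- `θ` is an inner function: it is essentially bounded, unimodular a.e. on the circle, and
all its negative Fourier coefficients vanish (i.e. it is the boundary function of a bounded
analytic function on the disc). -/
structure IsInner (θ : Tc → ℂ) : Prop where
  memLinf : MemLp θ ⊤ μ0
  unimodular : ∀ᵐ x ∂μ0, ‖θ x‖ = 1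
  analytic : ∀ n : ℤ, n < 0 → fourierCoeff θ n = 0

/-- Pointwise complex conjugation of a function on the circle. -/
def conjFun (f : Tc → ℂ) : Tc → ℂ := fun x => (starRingEnd ℂ) (f x)

lemma memLp_conj {f : Tc → ℂ} {p : ℝ≥0∞} (hf : MemLp f p μ0) : MemLp (conjFun f) p μ0 := by
  refine ⟨continuous_star.comp_aestronglyMeasurable hf.1, ?_⟩
  have h : eLpNorm (conjFun f) p μ0 = eLpNorm f p μ0 :=
    eLpNorm_congr_norm_ae (Filter.Eventually.of_forall fun x => by
      simp [conjFun])
  rw [h]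
  exact hf.2

/-- Complex conjugation on `L²(𝕋)`. -/
def conjL2 (f : L2) : L2 := (memLp_conj (Lp.memLp f)).toLp (conjFun ⇑f)

end Paper
namespace Paper

/-- The set `w·U = {h ∈ L² : h = w·k (a.e.) for some k ∈ U}`, for a fixed function `w` on the
circle and a subspace `U ⊆ L²`; this is a (not necessarily closed) subspace of `L²`. -/
def mulSet (w : Tc → ℂ) (U : Submodule ℂ L2) : Submodule ℂ L2 where
  carrier := {h : L2 | ∃ k ∈ U, (⇑h : Tc → ℂ) =ᵐ[μ0] fun x => w x * (⇑k : Tc → ℂ) x}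
  add_mem' := by
    rintro a b ⟨k₁, hk₁, ha⟩ ⟨k₂, hk₂, hb⟩
    refine ⟨k₁ + k₂, U.add_mem hk₁ hk₂, ?_⟩
    filter_upwards [ha, hb, Lp.coeFn_add a b, Lp.coeFn_add k₁ k₂] with x h1 h2 h3 h4
    simp only [h3, Pi.add_apply, h1, h2, h4, mul_add]
  zero_mem' := by
    refine ⟨0, U.zero_mem, ?_⟩
    filter_upwards [Lp.coeFn_zero ℂ 2 μ0] with x h1
    simp [h1]
  smul_mem' := by
    rintro c a ⟨k, hk, ha⟩
    refine ⟨c • k, U.smul_mem c hk, ?_⟩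
    filter_upwards [ha, Lp.coeFn_smul c a, Lp.coeFn_smul c k] with x h1 h2 h3
    simp only [h2, Pi.smul_apply, h1, h3, smul_eq_mul]
    ring

/-- `f` is an outer function: `f ∈ H²` and the polynomial multiples of `f` are dense in `H²`
(i.e. `f` is cyclic for the forward shift). -/
def IsOuter (f : L2) : Prop :=
  f ∈ H2 ∧
    (Submodule.span ℂ (Set.range fun k : ℕ => ((mulLM zf) ^ k) f)).topologicalClosure = H2

/-- `h` is a cyclic vector for the backward shift `S*` on `H²`. -/
def CyclicSstar (h : L2) : Prop :=
  (Submodule.span ℂ (Set.range fun k : ℕ => (Sstar ^ k) h)).topologicalClosure = H2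

/-- `d` divides `u` in the sense of inner functions. -/
def InnerDvd (d u : Tc → ℂ) : Prop :=
  ∃ v : Tc → ℂ, IsInner v ∧ ∀ᵐ x ∂μ0, u x = d x * v x

/-- Two inner functions have greatest common inner divisor `1`, i.e. every common inner
divisor is a (necessarily unimodular) constant. -/
def CoprimeInner (u₁ u₂ : Tc → ℂ) : Prop :=
  ∀ d : Tc → ℂ, IsInner d → InnerDvd d u₁ → InnerDvd d u₂ → ∃ c : ℂ, ∀ᵐ x ∂μ0, d x = c

/-- The kernel of the truncated Toeplitz operator `A_g^θ = P_θ (g ·) : K_θ → K_θ`: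
`f ∈ ker A_g^θ` iff `f ∈ K_θ` and `g f ⊥ K_θ`. -/
def kerA (θ g : Tc → ℂ) : Submodule ℂ L2 :=
  Kmod θ ⊓ ((Kmod θ)ᗮ).comap (mulLM g)

/-- The kernel of the dual truncated Toeplitz operator `D_g^θ = Q (g ·) : K_θ^⊥ → K_θ^⊥`:
`f ∈ ker D_g^θ` iff `f ∈ K_θ^⊥` and `g f ⊥ K_θ^⊥`. -/
def kerD (θ g : Tc → ℂ) : Submodule ℂ L2 :=
  (Kmod θ)ᗮ ⊓ (((Kmod θ)ᗮ)ᗮ).comap (mulLM g)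

/-- The space `A = {f ∈ ker D_g^θ : gf ∈ K_θ ∩ zH²}`. -/
def dualA (θ g : Tc → ℂ) : Submodule ℂ L2 :=
  kerD θ g ⊓ (Kmod θ ⊓ coeffGE 1).comap (mulLM g)

/-- The space `C = ker D_g^θ ∩ (conj H²₀ ⊕ θzH²) ∩ A`. -/
def dualC (θ g : Tc → ℂ) : Submodule ℂ L2 :=
  kerD θ g ⊓ (coeffLT 0 ⊔ (coeffGE 1).map (mulLM θ)) ⊓ dualA θ g

end Paper
namespace Paper

/-- The vector-valued space `L²(𝕋, ℂⁿ)`, realised as an `ℓ²`-direct sum of `n` copies of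
`L²(𝕋)`; the subspace `H2v n` below is the vector-valued Hardy space `H²(𝔻, ℂⁿ)`. -/
abbrev Vec (n : ℕ) : Type := PiLp 2 (fun _ : Fin n => L2)

/-- The `i`-th component, as a linear map `L²(𝕋, ℂⁿ) → L²(𝕋)`. -/
def compLM {n : ℕ} (i : Fin n) : Vec n →ₗ[ℂ] L2 where
  toFun F := F i
  map_add' F G := rfl
  map_smul' c F := rfl

/-- Vector-valued analogue of `coeffGE`: `coeffGEv n 0 = H²(𝔻, ℂⁿ)` and
`coeffGEv n 1 = zH²(𝔻, ℂⁿ)`. -/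
def coeffGEv (n : ℕ) (k : ℤ) : Submodule ℂ (Vec n) :=
  ⨅ i : Fin n, (coeffGE k).comap (compLM i)

/-- The vector-valued Hardy space `H²(𝔻, ℂⁿ)`. -/
def H2v (n : ℕ) : Submodule ℂ (Vec n) := coeffGEv n 0

/-- The vector-valued model space `K_θ(𝔻, ℂⁿ)` (all components in `K_θ`). -/
def Kv (θ : Tc → ℂ) (n : ℕ) : Submodule ℂ (Vec n) :=
  ⨅ i : Fin n, (Kmod θ).comap (compLM i)

/-- Evaluation at the origin, `F ↦ F(0)`, for (Hardy-space) elements of `L²(𝕋, ℂⁿ)`. -/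
def ev0 {n : ℕ} (F : Vec n) : EuclideanSpace ℂ (Fin n) := WithLp.toLp 2 (fun i => cf (F i) 0)

/-- Evaluation at the origin as a linear map `H²(𝔻, ℂⁿ) → ℂⁿ`. -/
def ev0LM (n : ℕ) : Vec n →ₗ[ℂ] EuclideanSpace ℂ (Fin n) where
  toFun := ev0
  map_add' _F _G := by
    ext i
    simp [ev0, cf]
  map_smul' _c _F := by
    ext i
    simp [ev0, cf]

/-- The componentwise backward shift on `L²(𝕋, ℂⁿ)`. -/
def SstarV {n : ℕ} : Vec n →ₗ[ℂ] Vec n where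
  toFun F := WithLp.toLp 2 (fun i => Sstar (F i))
  map_add' _F _G := by
    ext i
    simp
  map_smul' _c _F := by
    ext i
    simp

/-- Componentwise multiplication by a scalar `L^∞` function on `L²(𝕋, ℂⁿ)`. -/
def mulVLM (g : Tc → ℂ) {n : ℕ} : Vec n →ₗ[ℂ] Vec n where
  toFun F := WithLp.toLp 2 (fun i => mulLM g (F i))
  map_add' _F _G := by
    ext i
    simp
  map_smul' _c _F := by
    ext i
    simp

/-- The projection onto the first `i` coordinates, `P_i : H²(𝔻, ℂⁿ) → H²(𝔻, ℂⁱ)`. -/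
def projLE {n i : ℕ} (h : i ≤ n) : Vec n →ₗ[ℂ] Vec i where
  toFun F := WithLp.toLp 2 (fun j => F (Fin.castLE h j))
  map_add' F G := rfl
  map_smul' c F := rfl

/-- The `i`-th row of a matrix symbol applied to a vector function:
`F ↦ ∑ j, G i j • F j`. -/
def rowLM {n : ℕ} (G : Matrix (Fin n) (Fin n) (Tc → ℂ)) (i : Fin n) : Vec n →ₗ[ℂ] L2 :=
  ∑ j : Fin n, (mulLM (G i j)).comp (compLM j)

/-- The kernel of the block Toeplitz operator `T_G = P₊(G ·)` on `H²(𝔻, ℂⁿ)`: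
`F ∈ ker T_G` iff `F ∈ H²(𝔻, ℂⁿ)` and every component of `GF` is orthogonal to `H²`. -/
def kerT {n : ℕ} (G : Matrix (Fin n) (Fin n) (Tc → ℂ)) : Submodule ℂ (Vec n) :=
  H2v n ⊓ ⨅ i : Fin n, (H2ᗮ).comap (rowLM G i)

/-- The kernel of the matrix truncated Toeplitz operator `A_G^θ = P_θ(G ·)` on `K_θ(𝔻, ℂ²)`. -/
def kerAv (θ : Tc → ℂ) (G : Matrix (Fin 2) (Fin 2) (Tc → ℂ)) : Submodule ℂ (Vec 2) :=
  Kv θ 2 ⊓ ⨅ i : Fin 2, ((Kmod θ)ᗮ).comap (rowLM G i)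

/-- The scalar-type space `w·U ⊆ L²(𝕋, ℂⁿ)`, for a fixed vector function `w` and a
subspace `U ⊆ L²(𝕋)` of scalar functions. -/
def vecMulSet {n : ℕ} (w : Vec n) (U : Submodule ℂ L2) : Submodule ℂ (Vec n) where
  carrier := {F | ∃ k ∈ U, ∀ i : Fin n,
    (⇑(F i) : Tc → ℂ) =ᵐ[μ0] fun x => (⇑(w i) : Tc → ℂ) x * (⇑k : Tc → ℂ) x}
  add_mem' := by
    rintro a b ⟨k₁, hk₁, ha⟩ ⟨k₂, hk₂, hb⟩
    refine ⟨k₁ + k₂, U.add_mem hk₁ hk₂, fun i => ?_⟩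
    have hab : (a + b) i = a i + b i := rfl
    rw [hab]
    filter_upwards [ha i, hb i, Lp.coeFn_add (a i) (b i), Lp.coeFn_add k₁ k₂]
      with x h1 h2 h3 h4
    simp only [h3, Pi.add_apply, h1, h2, h4, mul_add]
  zero_mem' := by
    refine ⟨0, U.zero_mem, fun i => ?_⟩
    have h0 : (0 : Vec n) i = 0 := rfl
    rw [h0]
    filter_upwards [Lp.coeFn_zero ℂ 2 μ0] with x h1
    simp [h1]
  smul_mem' := by
    rintro c a ⟨k, hk, ha⟩
    refine ⟨c • k, U.smul_mem c hk, fun i => ?_⟩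
    have hc : (c • a) i = c • (a i) := rfl
    rw [hc]
    filter_upwards [ha i, Lp.coeFn_smul c (a i), Lp.coeFn_smul c k] with x h1 h2 h3
    simp only [h2, Pi.smul_apply, h1, h3, smul_eq_mul]
    ring

end Paper
namespace Paper

/-- The representation `F = F₀ k₀ + z ∑ⱼ kⱼ eⱼ` of Theorem 3.4(1): here the columns of `F₀`
are `W 0, …, W (r-1)`, the `eⱼ` are an orthonormal basis of the defect space, and the
parameter `k = (k₀, k₁, …, k_m)` runs through a subspace of `H²(𝔻, ℂ^{r+m})`. -/
def rep1 {n r m : ℕ} (W : Fin r → Vec n) (e : Fin m → Vec n) (k : Vec (r + m)) (F : Vec n) :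
    Prop :=
  ∀ i : Fin n,
    (⇑(F i) : Tc → ℂ) =ᵐ[μ0] fun x =>
      (∑ j : Fin r, (⇑(k (Fin.castAdd m j)) : Tc → ℂ) x * (⇑(W j i) : Tc → ℂ) x) +
        zf x * ∑ j : Fin m, (⇑(k (Fin.natAdd r j)) : Tc → ℂ) x * (⇑(e j i) : Tc → ℂ) x

/-- The representation `F = z ∑ⱼ kⱼ eⱼ` of Theorem 3.4(2). -/
def rep2 {n m : ℕ} (e : Fin m → Vec n) (k : Vec m) (F : Vec n) : Prop :=
  ∀ i : Fin n,
    (⇑(F i) : Tc → ℂ) =ᵐ[μ0] fun x =>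
      zf x * ∑ j : Fin m, (⇑(k j) : Tc → ℂ) x * (⇑(e j i) : Tc → ℂ) x

end Paper
namespace Paper

/-- The matrix symbol `G = [[conj θ, 0], [g, θ]]` associated with `A_g^θ`. -/
def Gmat (θ g : Tc → ℂ) : Matrix (Fin 2) (Fin 2) (Tc → ℂ) :=
  !![conjFun θ, 0; g, θ]



section NearlyInvariantHelpers

local notation "⟪" x ", " y "⟫" => @inner ℂ _ _ x y

lemma coeFn_mulLM {g : Tc → ℂ} (hg : MemLp g ⊤ μ0) (f : L2) :
    (⇑(mulLM g f) : Tc → ℂ) =ᵐ[μ0] fun x => g x * (⇑f) x := by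
  simp only [mulLM, dif_pos hg, LinearMap.coe_mk, AddHom.coe_mk]
  filter_upwards [MemLp.coeFn_toLp (MemLp.smul (r := 2) (Lp.memLp f) hg)] with x hx
  simpa using hx

lemma cf_repr (f : L2) (n : ℤ) : cf f n = fourierBasis.repr f n := rfl

lemma cf_eq_inner (f : L2) (n : ℤ) :
    cf f n = ⟪(fourierBasis n : L2), f⟫ := by
  rw [cf_repr]; exact fourierBasis.repr_apply_apply f n

lemma cf_fourierCoeff (f : L2) (n : ℤ) : cf f n = fourierCoeff (⇑f) n := by
  rw [cf_repr]; exact fourierBasis_repr f n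

lemma cf_sub (a b : L2) (n : ℤ) : cf (a - b) n = cf a n - cf b n := by
  simp [cf]

lemma cf_smul (c : ℂ) (a : L2) (n : ℤ) : cf (c • a) n = c * cf a n := by
  simp [cf]

lemma cf_inj {a b : L2} (h : ∀ n, cf a n = cf b n) : a = b := by
  apply fourierBasis.repr.injective
  apply lp.ext
  funext n
  exact h n

lemma zbar_mul_zf (x : Tc) : zbar x * zf x = 1 := by
  rw [zf, zbar, ← fourier_add]
  norm_num

lemma conjFun_zf : conjFun zf = zbar := by
  funext x
  exact (fourier_neg (n := 1)).symm

lemma conjFun_zbar : conjFun zbar = zf := by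
  funext x
  simp only [conjFun, zbar, zf, fourier_neg, Complex.conj_conj]

lemma inner_mulLM_right {g : Tc → ℂ} (hg : MemLp g ⊤ μ0) (a b : L2) :
    ⟪a, mulLM g b⟫ = ⟪mulLM (conjFun g) a, b⟫ := by
  rw [MeasureTheory.L2.inner_def, MeasureTheory.L2.inner_def]
  refine MeasureTheory.integral_congr_ae ?_
  filter_upwards [coeFn_mulLM hg b, coeFn_mulLM (memLp_conj hg) a] with x h1 h2
  rw [h1, h2]
  simp only [RCLike.inner_apply, conjFun, map_mul, Complex.conj_conj, starRingEnd_apply,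
    star_star]
  ring

lemma inner_mulLM_zf_zf (a b : L2) :
    ⟪mulLM zf a, mulLM zf b⟫ = ⟪a, b⟫ := by
  rw [MeasureTheory.L2.inner_def, MeasureTheory.L2.inner_def]
  refine MeasureTheory.integral_congr_ae ?_
  filter_upwards [coeFn_mulLM memLp_zf a, coeFn_mulLM memLp_zf b] with x h1 h2
  rw [h1, h2]
  simp only [RCLike.inner_apply', map_mul]
  have hz : (starRingEnd ℂ) (zf x) * zf x = 1 := by
    have := congrFun conjFun_zf x
    simp only [conjFun] at this
    rw [this, zbar_mul_zf]
  calc (starRingEnd ℂ) (zf x) * (starRingEnd ℂ) (⇑a x) * (zf x * ⇑b x)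
      = ((starRingEnd ℂ) (zf x) * zf x) * ((starRingEnd ℂ) (⇑a x) * ⇑b x) := by ring
    _ = (starRingEnd ℂ) (⇑a x) * ⇑b x := by rw [hz, one_mul]

lemma coeFn_basis (n : ℤ) :
    (⇑(fourierBasis n : L2) : Tc → ℂ) =ᵐ[μ0] fun x => fourier n x := by
  have h1 : (fourierBasis n : L2) = fourierLp 2 n := by
    rw [← coe_fourierBasis]
  rw [h1]
  exact coeFn_fourierLp 2 n

lemma mulLM_zf_basis (n : ℤ) :
    mulLM zf (fourierBasis n : L2) = (fourierBasis (n + 1) : L2) := by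
  apply MeasureTheory.Lp.ext
  filter_upwards [coeFn_mulLM memLp_zf (fourierBasis n : L2), coeFn_basis n,
    coeFn_basis (n + 1)] with x h1 h2 h3
  rw [h1, h2, h3, show n + 1 = 1 + n by ring, fourier_add]
  rfl

lemma mulLM_zbar_basis (n : ℤ) :
    mulLM zbar (fourierBasis n : L2) = (fourierBasis (n - 1) : L2) := by
  apply MeasureTheory.Lp.ext
  filter_upwards [coeFn_mulLM memLp_zbar (fourierBasis n : L2), coeFn_basis n,
    coeFn_basis (n - 1)] with x h1 h2 h3
  rw [h1, h2, h3, show n - 1 = -1 + n by ring, fourier_add]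
  rfl

lemma cf_mulLM_zf (f : L2) (n : ℤ) : cf (mulLM zf f) n = cf f (n - 1) := by
  rw [cf_eq_inner, inner_mulLM_right memLp_zf, conjFun_zf, mulLM_zbar_basis, ← cf_eq_inner]

lemma cf_mulLM_zbar (f : L2) (n : ℤ) : cf (mulLM zbar f) n = cf f (n + 1) := by
  rw [cf_eq_inner, inner_mulLM_right memLp_zbar, conjFun_zbar, mulLM_zf_basis, ← cf_eq_inner]

lemma cf_basis (m n : ℤ) :
    cf (fourierBasis m : L2) n = if n = m then 1 else 0 := by
  classical
  rw [cf_repr, fourierBasis.repr_self]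
  by_cases h : n = m
  · subst h; rw [if_pos rfl]; exact lp.single_apply_self 2 n 1
  · rw [if_neg h]; exact lp.single_apply_ne 2 m 1 h

lemma basis_mem_H2 {n : ℤ} (hn : 0 ≤ n) : (fourierBasis n : L2) ∈ H2 := by
  rw [H2, mem_coeffGE]
  intro m hm
  rw [cf_basis, if_neg (by omega)]

lemma mem_H2_iff {f : L2} : f ∈ H2 ↔ ∀ n < 0, cf f n = 0 := by
  rw [H2, mem_coeffGE]

lemma projCLM_mem (U : Submodule ℂ L2) (hU : IsClosed (U : Set L2)) (v : L2) :
    projCLM U hU v ∈ U := by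
  letI : CompleteSpace U := hU.completeSpace_coe
  exact SetLike.coe_mem _

lemma projCLM_eq_self (U : Submodule ℂ L2) (hU : IsClosed (U : Set L2)) {v : L2}
    (hv : v ∈ U) : projCLM U hU v = v := by
  letI : CompleteSpace U := hU.completeSpace_coe
  exact U.starProjection_eq_self_iff.mpr hv

lemma sub_projCLM_mem_orth (U : Submodule ℂ L2) (hU : IsClosed (U : Set L2)) (v : L2) :
    v - projCLM U hU v ∈ Uᗮ := by
  letI : CompleteSpace U := hU.completeSpace_coe
  exact U.sub_starProjection_mem_orthogonal v

lemma cf_Pplus_of_nonneg (u : L2) {n : ℤ} (hn : 0 ≤ n) : cf (Pplus u) n = cf u n := by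
  have h1 : cf (u - Pplus u) n = 0 := by
    rw [cf_eq_inner]
    exact (Submodule.mem_orthogonal H2 _).mp
      (sub_projCLM_mem_orth H2 (isClosed_coeffGE 0) u) _ (basis_mem_H2 hn)
  rw [cf_sub] at h1
  exact (sub_eq_zero.mp h1).symm

lemma Pplus_mem (u : L2) : Pplus u ∈ H2 := projCLM_mem H2 (isClosed_coeffGE 0) u

lemma cf_mulLM_neg_of_analytic {u : Tc → ℂ} (hu : MemLp u ⊤ μ0)
    (huan : ∀ k : ℤ, k < 0 → fourierCoeff u k = 0) {f : L2} (hf : f ∈ H2)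
    {n : ℤ} (hn : n < 0) : cf (mulLM u f) n = 0 := by
  rw [cf_eq_inner, inner_mulLM_right hu]
  set v : L2 := mulLM (conjFun u) (fourierBasis n : L2) with hv
  rw [← fourierBasis.tsum_inner_mul_inner v f]
  have hterm : ∀ m : ℤ,
      ⟪v, (fourierBasis m : L2)⟫ * ⟪(fourierBasis m : L2), f⟫ = 0 := by
    intro m
    rcases lt_or_ge m 0 with hm | hm
    · rw [← cf_eq_inner, mem_H2_iff.mp hf m hm, mul_zero]
    · have hvm : cf v m = 0 := by
        rw [cf_fourierCoeff]
        have hae : (⇑v : Tc → ℂ) =ᵐ[μ0] fun x => conjFun u x * fourier n x := by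
          filter_upwards [coeFn_mulLM (memLp_conj hu) (fourierBasis n : L2),
            coeFn_basis n] with x h1 h2
          rw [h1, h2]
        have e1 : fourierCoeff (⇑v : Tc → ℂ) m
            = fourierCoeff (fun x => conjFun u x * fourier n x) m := by
          simp only [fourierCoeff]
          refine MeasureTheory.integral_congr_ae ?_
          filter_upwards [hae] with x hx
          rw [hx]
        have e2 : fourierCoeff (fun x => conjFun u x * fourier n x) m
            = (starRingEnd ℂ) (fourierCoeff u (n - m)) := by
          simp only [fourierCoeff]
          rw [← integral_conj]
          refine MeasureTheory.integral_congr_ae (Filter.Eventually.of_forall fun x => ?_)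
          rw [show (n - m : ℤ) = n + -m from by ring]
          simp only [smul_eq_mul, conjFun, fourier_add, fourier_neg, map_mul, Complex.conj_conj]
          ring
        rw [e1, e2, huan (n - m) (by omega), map_zero]
      have : ⟪v, (fourierBasis m : L2)⟫ = 0 := by
        rw [← inner_conj_symm, ← cf_eq_inner, hvm, map_zero]
      rw [this, zero_mul]
  exact (tsum_congr hterm).trans tsum_zero

lemma mulLM_zf_zbar (v : L2) : mulLM zf (mulLM zbar v) = v := by
  apply MeasureTheory.Lp.ext
  filter_upwards [coeFn_mulLM memLp_zf (mulLM zbar v), coeFn_mulLM memLp_zbar v] with x h1 h2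
  rw [h1, h2, ← mul_assoc, mul_comm (zf x) (zbar x), zbar_mul_zf, one_mul]

lemma mulLM_zbar_zf (v : L2) : mulLM zbar (mulLM zf v) = v := by
  apply MeasureTheory.Lp.ext
  filter_upwards [coeFn_mulLM memLp_zbar (mulLM zf v), coeFn_mulLM memLp_zf v] with x h1 h2
  rw [h1, h2, ← mul_assoc, zbar_mul_zf, one_mul]

end NearlyInvariantHelpers

/-- **(Section 4).**  With `ker A_g^θ = w₁·K_{zΦ}` as in (4.1), the kernel of the
truncated Toeplitz operator is nearly `S*`-invariant with defect space
`span{w₁/z} ∩ H²` (in particular of defect at most `1`). -/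
theorem kernel_truncated_toeplitz_nearly_invariant_defect_one
    (θ g : Tc → ℂ) (hθ : IsInner θ) (hg : MemLp g ⊤ μ0)
    (hker : kerA θ g ≠ ⊥)
    (w : Vec 2)
    (hw : w ∈ kerT (Gmat θ g) ⊓ (kerT (Gmat θ g) ⊓ coeffGEv 2 1)ᗮ) (hwn : ‖w‖ = 1)
    (Φ : Tc → ℂ) (hΦ : IsInner Φ)
    (hrep : kerA θ g = mulSet (⇑(w 0)) (Kmod fun x => zf x * Φ x)) :
    (∀ f ∈ kerA θ g, cf f 0 = 0 →
        Sstar f ∈ kerA θ g ⊔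
          (H2 ⊓ (Submodule.span ℂ {w 0}).comap (mulLM zf))) ∧
      Module.finrank ℂ ↥(H2 ⊓ (Submodule.span ℂ {w 0}).comap (mulLM zf)) ≤ 1 := by
  classical
  have hzΦ : MemLp (fun x => zf x * Φ x) ⊤ μ0 := by
    have h := MemLp.smul (r := ⊤) hΦ.memLinf memLp_zf
    exact h
  constructor
  · intro f hf hf0
    have hf' := hf
    rw [hrep] at hf'
    obtain ⟨k, hk, hfk⟩ := hf'
    have hkmem := Submodule.mem_inf.mp hk
    have hkH2 : k ∈ H2 := hkmem.1
    have hkO : k ∈ (thetaH2 fun x => zf x * Φ x)ᗮ := hkmem.2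
    set c : ℂ := cf k 0 with hc
    set kt : L2 := Sstar k with hkt
    have hktP : kt = Pplus (mulLM zbar k) := rfl
    have hktH2 : kt ∈ H2 := by rw [hktP]; exact Pplus_mem _
    have key : mulLM zf kt = k - c • (fourierBasis 0 : L2) := by
      apply cf_inj
      intro n
      rw [cf_mulLM_zf, cf_sub, cf_smul, cf_basis]
      rcases lt_or_ge (n - 1) 0 with h | h
      · rw [mem_H2_iff.mp hktH2 _ h]
        by_cases h0 : n = 0
        · rw [if_pos h0, h0, ← hc]; ring
        · rw [if_neg h0, mem_H2_iff.mp hkH2 n (by omega)]; ring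
      · rw [hktP, cf_Pplus_of_nonneg _ h, cf_mulLM_zbar, show n - 1 + 1 = n from by ring,
          if_neg (by omega), mul_zero, sub_zero]
    have hk_eq : k = mulLM zf kt + c • (fourierBasis 0 : L2) := by
      rw [key]; abel
    have hk_ae : (⇑k : Tc → ℂ) =ᵐ[μ0] fun x => zf x * ⇑kt x + c := by
      nth_rewrite 1 [hk_eq]
      filter_upwards [MeasureTheory.Lp.coeFn_add (mulLM zf kt) (c • (fourierBasis 0 : L2)),
        MeasureTheory.Lp.coeFn_smul c (fourierBasis 0 : L2), coeFn_mulLM memLp_zf kt,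
        coeFn_basis 0] with x h1 h2 h3 h4
      rw [h1]
      simp only [Pi.add_apply]
      rw [h3, h2]
      simp only [Pi.smul_apply, smul_eq_mul]
      rw [h4, fourier_zero, mul_one]
    set q : L2 := mulLM zbar f - c • mulLM zbar (w 0) with hq
    have hq_ae : (⇑q : Tc → ℂ) =ᵐ[μ0] fun x => ⇑(w 0) x * ⇑kt x := by
      filter_upwards [MeasureTheory.Lp.coeFn_sub (mulLM zbar f) (c • mulLM zbar (w 0)),
        MeasureTheory.Lp.coeFn_smul c (mulLM zbar (w 0)), coeFn_mulLM memLp_zbar f,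
        coeFn_mulLM memLp_zbar (w 0), hfk, hk_ae] with x h1 h2 h3 h4 h5 h6
      rw [hq, h1]
      simp only [Pi.sub_apply]
      rw [h3, h2]
      simp only [Pi.smul_apply, smul_eq_mul]
      rw [h4, h5, h6]
      linear_combination (⇑(w 0) x * ⇑kt x) * zbar_mul_zf x
    have hktK : kt ∈ Kmod fun x => zf x * Φ x := by
      refine Submodule.mem_inf.mpr ⟨hktH2, ?_⟩
      rw [Submodule.mem_orthogonal]
      rintro u hu
      obtain ⟨p, hp, rfl⟩ := hu
      have hzp : mulLM zf p ∈ H2 := by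
        rw [mem_H2_iff]
        intro n hn
        rw [cf_mulLM_zf]
        exact mem_H2_iff.mp hp _ (by omega)
      have e1 : mulLM (fun x => zf x * Φ x) p = mulLM zf (mulLM Φ p) := by
        apply MeasureTheory.Lp.ext
        filter_upwards [coeFn_mulLM hzΦ p, coeFn_mulLM memLp_zf (mulLM Φ p),
          coeFn_mulLM hΦ.memLinf p] with x h1 h2 h3
        rw [h1, h2, h3]; ring
      have e2 : mulLM zf (mulLM zf (mulLM Φ p)) = mulLM (fun x => zf x * Φ x) (mulLM zf p) := by
        apply MeasureTheory.Lp.ext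
        filter_upwards [coeFn_mulLM memLp_zf (mulLM zf (mulLM Φ p)),
          coeFn_mulLM memLp_zf (mulLM Φ p), coeFn_mulLM hΦ.memLinf p,
          coeFn_mulLM hzΦ (mulLM zf p), coeFn_mulLM memLp_zf p] with x h1 h2 h3 h4 h5
        rw [h1, h2, h3, h4, h5]; ring
      rw [e1, ← inner_mulLM_zf_zf (mulLM zf (mulLM Φ p)) kt, key, inner_sub_right,
        inner_smul_right]
      have t1 : inner (𝕜 := ℂ) (mulLM zf (mulLM zf (mulLM Φ p))) k = 0 := by
        rw [e2]
        exact (Submodule.mem_orthogonal _ k).mp hkO _ (Submodule.mem_map_of_mem hzp)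
      have t2 : inner (𝕜 := ℂ) (mulLM zf (mulLM zf (mulLM Φ p))) (fourierBasis 0 : L2) = 0 := by
        rw [← inner_conj_symm, ← cf_eq_inner, cf_mulLM_zf, cf_mulLM_zf,
          cf_mulLM_neg_of_analytic hΦ.memLinf hΦ.analytic hp (show (0 : ℤ) - 1 - 1 < 0 by norm_num),
          map_zero]
      rw [t1, t2, mul_zero, sub_zero]
    have hqker : q ∈ kerA θ g := by
      rw [hrep]
      exact ⟨kt, hktK, hq_ae⟩
    have hfH2 : f ∈ H2 := (Submodule.mem_inf.mp (Submodule.mem_inf.mp hf).1).1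
    have hzbf : mulLM zbar f ∈ H2 := by
      rw [mem_H2_iff]
      intro n hn
      rw [cf_mulLM_zbar]
      rcases eq_or_lt_of_le (show n + 1 ≤ 0 by omega) with h | h
      · rw [h]; exact hf0
      · exact mem_H2_iff.mp hfH2 _ h
    have hS : Sstar f = mulLM zbar f := projCLM_eq_self H2 (isClosed_coeffGE 0) hzbf
    have hd : c • mulLM zbar (w 0) ∈ H2 ⊓ (Submodule.span ℂ {w 0}).comap (mulLM zf) := by
      refine Submodule.mem_inf.mpr ⟨?_, ?_⟩
      · have heq : c • mulLM zbar (w 0) = mulLM zbar f - q := by rw [hq]; abel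
        rw [heq]
        exact Submodule.sub_mem _ hzbf (Submodule.mem_inf.mp (Submodule.mem_inf.mp hqker).1).1
      · rw [Submodule.mem_comap, LinearMap.map_smul, mulLM_zf_zbar]
        exact Submodule.smul_mem _ c (Submodule.mem_span_singleton_self _)
    have hsum : Sstar f = q + c • mulLM zbar (w 0) := by
      rw [hS, hq]; abel
    rw [hsum]
    exact Submodule.add_mem_sup hqker hd
  · have hinj : Function.Injective (mulLM zf) := by
      intro a b hab
      have h2 := congrArg (mulLM zbar) hab
      rwa [mulLM_zbar_zf, mulLM_zbar_zf] at h2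
    have hmap : (H2 ⊓ (Submodule.span ℂ {w 0}).comap (mulLM zf)).map (mulLM zf)
        ≤ Submodule.span ℂ {w 0} := by
      rw [Submodule.map_le_iff_le_comap]
      exact inf_le_right
    haveI : FiniteDimensional ℂ (Submodule.span ℂ ({w 0} : Set L2)) := inferInstance
    haveI := Submodule.finiteDimensional_of_le hmap
    have e := Submodule.equivMapOfInjective (mulLM zf) hinj
      (H2 ⊓ (Submodule.span ℂ {w 0}).comap (mulLM zf))
    calc Module.finrank ℂ ↥(H2 ⊓ (Submodule.span ℂ {w 0}).comap (mulLM zf))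
        = Module.finrank ℂ
            ↥((H2 ⊓ (Submodule.span ℂ {w 0}).comap (mulLM zf)).map (mulLM zf)) :=
          LinearEquiv.finrank_eq e
      _ ≤ Module.finrank ℂ ↥(Submodule.span ℂ ({w 0} : Set L2)) := Submodule.finrank_mono hmap
      _ ≤ 1 := by
          by_cases hw0 : w 0 = 0
          · rw [hw0, Submodule.span_zero_singleton]
            simp [finrank_bot]
          · rw [finrank_span_singleton hw0]

end Paper
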